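/- Let F_1, F_2 be the coupled diffusion–convection operators defined in the context, with arbitrary real parameters. For any real constants δ_{s,i} (s = 1,2; i = 1,2,3,4), let u_s : ℝ² → ℝ be the bilinear function u_s(x_1,x_2) = δ_{s,1} + δ_{s,2}x_1 + δ_{s,3}x_2 + δ_{s,4}x_1x_2. Then for s = 1,2 and all (x_1,x_2) ∈ ℝ², F_s(u_1,u_2)(x_1,x_2) = (g_{s0}δ_{2,2} + h_{s0}δ_{2,3} + η_{s0}δ_{1,2} + d_{s0}δ_{1,3}) + (h_{s0}δ_{2,4} + d_{s0}δ_{1,4})x_1 + (g_{s0}δ_{2,4} + η_{s0}δ_{1,4})x_2. In particular, the product linear space Span{1, x_1, x_2, x_1x_2} × Span{1, x_1, x_2, x_1x_2} is invariant under the vector operator (F_1, F_2). -/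
import Mathlib


/-- Partial derivative in the first variable of a function `ℝ → ℝ → ℝ`. -/
noncomputable def pd1 (u : ℝ → ℝ → ℝ) : ℝ → ℝ → ℝ := fun x1 x2 => deriv (fun y => u y x2) x1

/-- Partial derivative in the second variable of a function `ℝ → ℝ → ℝ`. -/
noncomputable def pd2 (u : ℝ → ℝ → ℝ) : ℝ → ℝ → ℝ := fun x1 x2 => deriv (fun y => u x1 y) x2

/-- The coupled diffusion–convection operator `F_s`. -/
noncomputable def Fop (k0 q0 q1 p0 c0 c1 e0 g0 d0 h0 : ℝ) (u1 u2 : ℝ → ℝ → ℝ) : ℝ → ℝ → ℝ :=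
  fun x1 x2 =>
    pd1 (fun a b => (k0 - q1 * u2 a b) * pd1 u1 a b + (q1 * u1 a b + q0) * pd1 u2 a b) x1 x2 +
    pd2 (fun a b => (p0 - c1 * u2 a b) * pd2 u1 a b + (c1 * u1 a b + c0) * pd2 u2 a b) x1 x2 +
    e0 * pd1 u1 x1 x2 + g0 * pd1 u2 x1 x2 + d0 * pd2 u1 x1 x2 + h0 * pd2 u2 x1 x2

lemma dlin (A B x : ℝ) : deriv (fun y => A + B * y) x = B := by
  simpa using (((hasDerivAt_id x).const_mul B).const_add A).deriv

lemma pd1_bilin (c0 c1 c2 c3 : ℝ) :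
    pd1 (fun a b => c0 + c1 * a + c2 * b + c3 * a * b) = fun _ x2 => c1 + c3 * x2 := by
  funext x1 x2
  unfold pd1
  have h : (fun y => c0 + c1 * y + c2 * x2 + c3 * y * x2)
      = fun y => (c0 + c2 * x2) + (c1 + c3 * x2) * y := by funext y; ring
  rw [h, dlin]

lemma pd2_bilin (c0 c1 c2 c3 : ℝ) :
    pd2 (fun a b => c0 + c1 * a + c2 * b + c3 * a * b) = fun x1 _ => c2 + c3 * x1 := by
  funext x1 x2
  unfold pd2
  have h : (fun y => c0 + c1 * x1 + c2 * y + c3 * x1 * y)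
      = fun y => (c0 + c1 * x1) + (c2 + c3 * x1) * y := by funext y; ring
  rw [h, dlin]

lemma Fop_bilin (K Q0 Q1 P C0 C1 E G D H a0 a1 a2 a3 b0 b1 b2 b3 x1 x2 : ℝ) :
    Fop K Q0 Q1 P C0 C1 E G D H
      (fun a b => a0 + a1 * a + a2 * b + a3 * a * b)
      (fun a b => b0 + b1 * a + b2 * b + b3 * a * b) x1 x2 =
    (G * b1 + H * b2 + E * a1 + D * a2) + (H * b3 + D * a3) * x1 + (G * b3 + E * a3) * x2 := by
  unfold Fop
  simp only [pd1_bilin, pd2_bilin]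
  unfold pd1 pd2
  have h1 : (fun y => (K - Q1 * (b0 + b1 * y + b2 * x2 + b3 * y * x2)) * (a1 + a3 * x2) +
      (Q1 * (a0 + a1 * y + a2 * x2 + a3 * y * x2) + Q0) * (b1 + b3 * x2))
      = fun _ => (K - Q1 * (b0 + b2 * x2)) * (a1 + a3 * x2) +
        (Q1 * (a0 + a2 * x2) + Q0) * (b1 + b3 * x2) := by funext y; ring
  have h2 : (fun y => (P - C1 * (b0 + b1 * x1 + b2 * y + b3 * x1 * y)) * (a2 + a3 * x1) +
      (C1 * (a0 + a1 * x1 + a2 * y + a3 * x1 * y) + C0) * (b2 + b3 * x1))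
      = fun _ => (P - C1 * (b0 + b1 * x1)) * (a2 + a3 * x1) +
        (C1 * (a0 + a1 * x1) + C0) * (b2 + b3 * x1) := by funext y; ring
  rw [h1, h2, deriv_const, deriv_const]
  ring

/-- The span set in question. -/
def bilinSet : Set (ℝ → ℝ → ℝ) :=
  {fun _ _ => (1 : ℝ), fun a _ => a, fun _ b => b, fun a b => a * b}

lemma bilin_mem (c0 c1 c2 c3 : ℝ) :
    (fun a b => c0 + c1 * a + c2 * b + c3 * a * b) ∈ Submodule.span ℝ bilinSet := by
  have h : (fun a b => c0 + c1 * a + c2 * b + c3 * a * b)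
      = c0 • (fun _ _ => (1:ℝ)) + c1 • (fun a _ => a : ℝ → ℝ → ℝ) + c2 • (fun _ b => b : ℝ → ℝ → ℝ)
        + c3 • (fun a b => a * b : ℝ → ℝ → ℝ) := by
    funext a b
    simp [Pi.smul_apply]
    ring
  rw [h]
  have m1 : (fun _ _ => (1:ℝ)) ∈ Submodule.span ℝ bilinSet :=
    Submodule.subset_span (by simp [bilinSet])
  have m2 : (fun a _ => a : ℝ → ℝ → ℝ) ∈ Submodule.span ℝ bilinSet :=
    Submodule.subset_span (by simp [bilinSet])
  have m3 : (fun _ b => b : ℝ → ℝ → ℝ) ∈ Submodule.span ℝ bilinSet :=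
    Submodule.subset_span (by simp [bilinSet])
  have m4 : (fun a b => a * b : ℝ → ℝ → ℝ) ∈ Submodule.span ℝ bilinSet :=
    Submodule.subset_span (by simp [bilinSet])
  exact Submodule.add_mem _ (Submodule.add_mem _ (Submodule.add_mem _
    (Submodule.smul_mem _ _ m1) (Submodule.smul_mem _ _ m2)) (Submodule.smul_mem _ _ m3))
    (Submodule.smul_mem _ _ m4)

lemma mem_bilin {u : ℝ → ℝ → ℝ} (hu : u ∈ Submodule.span ℝ bilinSet) :
    ∃ c0 c1 c2 c3 : ℝ, u = fun a b => c0 + c1 * a + c2 * b + c3 * a * b := by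
  induction hu using Submodule.span_induction with
  | mem x hx =>
    rcases hx with h | h | h | h
    · exact ⟨1, 0, 0, 0, by subst h; funext a b; ring⟩
    · exact ⟨0, 1, 0, 0, by subst h; funext a b; ring⟩
    · exact ⟨0, 0, 1, 0, by subst h; funext a b; ring⟩
    · exact ⟨0, 0, 0, 1, by simp at h; subst h; funext a b; ring⟩
  | zero => exact ⟨0, 0, 0, 0, by funext a b; simp⟩
  | add x y _ _ hx hy =>
    obtain ⟨a0, a1, a2, a3, rfl⟩ := hx
    obtain ⟨b0, b1, b2, b3, rfl⟩ := hy
    exact ⟨a0 + b0, a1 + b1, a2 + b2, a3 + b3, by funext a b; simp [Pi.add_apply]; ring⟩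
  | smul r x _ hx =>
    obtain ⟨a0, a1, a2, a3, rfl⟩ := hx
    exact ⟨r * a0, r * a1, r * a2, r * a3, by funext a b; simp [Pi.smul_apply]; ring⟩

/-- `F_s` maps bilinear functions to the stated bilinear function; in particular
`Span{1,x₁,x₂,x₁x₂} × Span{1,x₁,x₂,x₁x₂}` is invariant under `(F_1, F_2)`. -/
theorem stmt_5 (k0 q0 q1 p0 c0 c1 η g d h : Fin 2 → ℝ) (δ : Fin 2 → Fin 4 → ℝ) :
    (∀ (s : Fin 2) (x1 x2 : ℝ),
      Fop (k0 s) (q0 s) (q1 s) (p0 s) (c0 s) (c1 s) (η s) (g s) (d s) (h s)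
        (fun a b => δ 0 0 + δ 0 1 * a + δ 0 2 * b + δ 0 3 * a * b)
        (fun a b => δ 1 0 + δ 1 1 * a + δ 1 2 * b + δ 1 3 * a * b) x1 x2 =
      (g s * δ 1 1 + h s * δ 1 2 + η s * δ 0 1 + d s * δ 0 2) +
      (h s * δ 1 3 + d s * δ 0 3) * x1 + (g s * δ 1 3 + η s * δ 0 3) * x2) ∧
    (∀ u1 u2 : ℝ → ℝ → ℝ,
      u1 ∈ Submodule.span ℝ
        ({fun _ _ => (1 : ℝ), fun a _ => a, fun _ b => b, fun a b => a * b} :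
          Set (ℝ → ℝ → ℝ)) →
      u2 ∈ Submodule.span ℝ
        ({fun _ _ => (1 : ℝ), fun a _ => a, fun _ b => b, fun a b => a * b} :
          Set (ℝ → ℝ → ℝ)) →
      ∀ s : Fin 2,
        Fop (k0 s) (q0 s) (q1 s) (p0 s) (c0 s) (c1 s) (η s) (g s) (d s) (h s) u1 u2 ∈
          Submodule.span ℝ
            ({fun _ _ => (1 : ℝ), fun a _ => a, fun _ b => b, fun a b => a * b} :
              Set (ℝ → ℝ → ℝ))) := by
  constructor
  · intro s x1 x2
    exact Fop_bilin _ _ _ _ _ _ _ _ _ _ _ _ _ _ _ _ _ _ _ _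
  · intro u1 u2 hu1 hu2 s
    obtain ⟨a0, a1, a2, a3, rfl⟩ := mem_bilin hu1
    obtain ⟨b0, b1, b2, b3, rfl⟩ := mem_bilin hu2
    have key : Fop (k0 s) (q0 s) (q1 s) (p0 s) (c0 s) (c1 s) (η s) (g s) (d s) (h s)
        (fun a b => a0 + a1 * a + a2 * b + a3 * a * b)
        (fun a b => b0 + b1 * a + b2 * b + b3 * a * b)
        = fun x1 x2 => (g s * b1 + h s * b2 + η s * a1 + d s * a2) +
          (h s * b3 + d s * a3) * x1 + (g s * b3 + η s * a3) * x2 + 0 * x1 * x2 := by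
      funext x1 x2
      rw [Fop_bilin]
      ring
    rw [key]
    exact bilin_mem _ _ _ _
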